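/- Let G be a finitely generated group of polynomial growth, and let S, S' be two finite sets of generators of G. For any two configurations c_1, c_2 ∈ Q^G, if d_{B,S}(c_1,c_2) = 0 then d_{B,S'}(c_1,c_2) = 0. That is, the equivalence classes of the Besicovitch pseudodistance with respect to balls are independent of the choice of generating set. -/

import Mathlib

open Filter Topology

noncomputable def hamDist {G Q : Type*} (U : Set G) (c₁ c₂ : G → Q) : ℕ :=
  {x ∈ U | c₁ x ≠ c₂ x}.ncard

/-- The ball of radius `n` centered at the identity in the word metric of `S ∪ S⁻¹`. -/
def wordBall {G : Type*} [Group G] (S : Set G) (n : ℕ) : Set G :=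
  {g | ∃ l : List G, (∀ x ∈ l, x ∈ S ∨ x⁻¹ ∈ S) ∧ l.length ≤ n ∧ l.prod = g}

/-- Besicovitch pseudodistance with respect to word-metric balls. -/
noncomputable def besDistBall {G Q : Type*} [Group G] (S : Set G) (c₁ c₂ : G → Q) : ℝ :=
  limsup (fun n => (hamDist (wordBall S n) c₁ c₂ : ℝ) / (wordBall S n).ncard) atTop

/-- Polynomial growth of degree `k` with respect to `S`. -/
def PolyGrowth {G : Type*} [Group G] (S : Set G) (k : ℕ) : Prop :=
  ∃ α₁ α₂ : ℝ, 0 < α₁ ∧ 0 < α₂ ∧ ∀ᶠ n : ℕ in atTop,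
    α₂ * (n : ℝ) ^ k ≤ ((wordBall S n).ncard : ℝ) ∧
    ((wordBall S n).ncard : ℝ) ≤ α₁ * (n : ℝ) ^ k

section aux

variable {G : Type*} [Group G] {S : Set G}

lemma one_mem_wordBall (S : Set G) (n : ℕ) : (1:G) ∈ wordBall S n :=
  ⟨[], by simp, by simp, rfl⟩

lemma wordBall_mono {m n : ℕ} (h : m ≤ n) : wordBall S m ⊆ wordBall S n :=
  fun _ ⟨l, h1, h2, h3⟩ => ⟨l, h1, h2.trans h, h3⟩

lemma inv_mem_wordBall {a : G} {n : ℕ} (ha : a ∈ wordBall S n) : a⁻¹ ∈ wordBall S n := by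
  obtain ⟨l, h1, h2, rfl⟩ := ha
  refine ⟨(l.map (·⁻¹)).reverse, ?_, by simpa using h2, ?_⟩
  · intro x hx
    simp only [List.mem_reverse, List.mem_map] at hx
    obtain ⟨y, hy, rfl⟩ := hx
    rcases h1 y hy with h | h
    · exact Or.inr (by simpa using h)
    · exact Or.inl h
  · rw [← List.prod_inv_reverse]

lemma mul_mem_wordBall {a b : G} {p q : ℕ} (ha : a ∈ wordBall S p) (hb : b ∈ wordBall S q) :
    a * b ∈ wordBall S (p + q) := by
  obtain ⟨l, h1, h2, rfl⟩ := ha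
  obtain ⟨l', h1', h2', rfl⟩ := hb
  refine ⟨l ++ l', ?_, by simpa using Nat.add_le_add h2 h2', by simp⟩
  intro x hx
  rcases List.mem_append.mp hx with h | h
  · exact h1 x h
  · exact h1' x h

lemma prod_mem_wordBall {m : ℕ} : ∀ (l : List G), (∀ x ∈ l, x ∈ wordBall S m) →
    l.prod ∈ wordBall S (m * l.length) := by
  intro l
  induction l with
  | nil => intro _; simpa using one_mem_wordBall S 0
  | cons a t ih =>
    intro h
    rw [List.prod_cons, List.length_cons, Nat.mul_succ, Nat.add_comm]
    exact mul_mem_wordBall (h a (List.mem_cons_self))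
      (ih fun x hx => h x (List.mem_cons_of_mem _ hx))

lemma wordBall_finite (hS : S.Finite) : ∀ n, (wordBall S n).Finite := by
  intro n
  induction n with
  | zero =>
    refine Set.Finite.subset (Set.finite_singleton 1) ?_
    rintro g ⟨l, _, h2, rfl⟩
    simp at h2
    simp [h2]
  | succ n ih =>
    have : wordBall S (n+1) ⊆ wordBall S n ∪ Set.image2 (· * ·) (S ∪ S⁻¹) (wordBall S n) := by
      rintro g ⟨l, h1, h2, rfl⟩
      match l with
      | [] => exact Or.inl ⟨[], by simp, by simp, rfl⟩
      | a :: t =>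
        refine Or.inr ⟨a, ?_, t.prod, ⟨t, fun x hx => h1 x (List.mem_cons_of_mem _ hx),
          by simpa using h2, rfl⟩, by simp⟩
        rcases h1 a (List.mem_cons_self) with h | h
        · exact Or.inl h
        · exact Or.inr (Set.mem_inv.mpr (by simpa using h))
    exact Set.Finite.subset (ih.union (Set.Finite.image2 _ (hS.union hS.inv) ih)) this

lemma exists_scale {S' : Set G} (hS'fin : S'.Finite) (hSgen : Subgroup.closure S = ⊤) :
    ∃ m : ℕ, 1 ≤ m ∧ ∀ n, wordBall S' n ⊆ wordBall S (m * n) := by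
  have key : ∀ g : G, ∃ k, g ∈ wordBall S k := by
    intro g
    have hg : g ∈ (Subgroup.closure S).toSubmonoid := by rw [hSgen]; trivial
    rw [Subgroup.closure_toSubmonoid] at hg
    obtain ⟨l, h1, h2⟩ := Submonoid.exists_list_of_mem_closure hg
    refine ⟨l.length, l, ?_, le_refl _, h2⟩
    intro x hx
    rcases h1 x hx with h | h
    · exact Or.inl h
    · exact Or.inr (Set.mem_inv.mp h)
  choose f hf using key
  set m := hS'fin.toFinset.sup f with hmdef
  have hm : ∀ s ∈ S', s ∈ wordBall S m := by
    intro s hs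
    exact wordBall_mono (Finset.le_sup (by simpa using hs)) (hf s)
  refine ⟨max m 1, le_max_right _ _, ?_⟩
  rintro n g ⟨l, h1, h2, rfl⟩
  have hl : ∀ x ∈ l, x ∈ wordBall S (max m 1) := by
    intro x hx
    rcases h1 x hx with h | h
    · exact wordBall_mono (le_max_left _ _) (hm x h)
    · simpa using inv_mem_wordBall (wordBall_mono (le_max_left m 1) (hm _ h))
  exact wordBall_mono (Nat.mul_le_mul_left _ h2) (prod_mem_wordBall l hl)

end aux

theorem besicovitch_ball_classes_independent_of_generators
    {G Q : Type*} [Group G] [Fintype Q] (hQ : 2 ≤ Fintype.card Q)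
    (S S' : Set G) (hSfin : S.Finite) (hS'fin : S'.Finite)
    (hSgen : Subgroup.closure S = ⊤) (hS'gen : Subgroup.closure S' = ⊤)
    (hSpoly : ∃ k, PolyGrowth S k) (hS'poly : ∃ k, PolyGrowth S' k)
    (c₁ c₂ : G → Q) (h : besDistBall S c₁ c₂ = 0) :
    besDistBall S' c₁ c₂ = 0 := by
  obtain ⟨k', α₁', α₂', hα₁', hα₂', hgrow⟩ := hS'poly
  obtain ⟨m, hm1, hsub⟩ := exists_scale hS'fin hSgen
  obtain ⟨m', hm'1, hsub'⟩ := exists_scale hSfin hS'gen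
  replace h : limsup (fun n => (hamDist (wordBall S n) c₁ c₂ : ℝ) / (wordBall S n).ncard) atTop = 0 := h
  show limsup (fun n => (hamDist (wordBall S' n) c₁ c₂ : ℝ) / (wordBall S' n).ncard) atTop = 0
  set f : ℕ → ℝ := fun n => (hamDist (wordBall S n) c₁ c₂ : ℝ) / (wordBall S n).ncard with hf
  set f' : ℕ → ℝ := fun n => (hamDist (wordBall S' n) c₁ c₂ : ℝ) / (wordBall S' n).ncard with hf'
  have bpos : ∀ n, (0:ℝ) < (wordBall S n).ncard := fun n => by
    exact_mod_cast (Set.ncard_pos (wordBall_finite hSfin n)).mpr ⟨1, one_mem_wordBall S n⟩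
  have b'pos : ∀ n, (0:ℝ) < (wordBall S' n).ncard := fun n => by
    exact_mod_cast (Set.ncard_pos (wordBall_finite hS'fin n)).mpr ⟨1, one_mem_wordBall S' n⟩
  have fnonneg : ∀ n, 0 ≤ f n := fun n => div_nonneg (Nat.cast_nonneg _) (Nat.cast_nonneg _)
  have f'nonneg : ∀ n, 0 ≤ f' n := fun n => div_nonneg (Nat.cast_nonneg _) (Nat.cast_nonneg _)
  have fle : ∀ n, f n ≤ 1 := by
    intro n
    rw [hf]
    refine div_le_one_of_le₀ ?_ (Nat.cast_nonneg _)
    exact_mod_cast Set.ncard_le_ncard (Set.sep_subset _ _) (wordBall_finite hSfin n)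
  -- f tends to 0
  have hub : IsBoundedUnder (· ≤ ·) atTop f := isBoundedUnder_of ⟨1, fle⟩
  have hlb : IsBoundedUnder (· ≥ ·) atTop f := isBoundedUnder_of ⟨0, fnonneg⟩
  have hliminf : liminf f atTop = 0 := by
    refine le_antisymm ((liminf_le_limsup hub hlb).trans_eq h) ?_
    exact le_liminf_of_le hub.isCoboundedUnder_ge (Eventually.of_forall fnonneg)
  have htend : Tendsto f atTop (𝓝 0) := tendsto_of_liminf_eq_limsup hliminf h hub hlb
  have hmul : Tendsto (fun n => m * n) atTop atTop := by
    apply tendsto_atTop_mono (fun n => Nat.le_mul_of_pos_left n hm1) tendsto_id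
  have htend2 : Tendsto (fun n => f (m * n)) atTop (𝓝 0) := htend.comp hmul
  -- eventual comparison
  set C : ℝ := α₁' * ((m' * m : ℕ) : ℝ) ^ k' / α₂' with hC
  have hcomp : ∀ᶠ n : ℕ in atTop, f' n ≤ C * f (m * n) := by
    obtain ⟨N, hN⟩ := eventually_atTop.mp hgrow
    filter_upwards [eventually_ge_atTop N] with n hn
    have hn2 : N ≤ m' * (m * n) := hn.trans (Nat.le_mul_of_pos_left _ hm1 |>.trans
      (Nat.le_mul_of_pos_left _ hm'1))
    have h1 := (hN n hn).1
    have h2 := (hN _ hn2).2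
    -- b (m n) ≤ C * b' n
    have hbb : ((wordBall S (m*n)).ncard : ℝ) ≤ ((wordBall S' (m' * (m * n))).ncard : ℝ) := by
      exact_mod_cast Set.ncard_le_ncard (hsub' (m*n)) (wordBall_finite hS'fin _)
    have hcast : ((m' * (m * n) : ℕ) : ℝ) ^ k' = ((m' * m : ℕ) : ℝ) ^ k' * (n:ℝ)^k' := by
      push_cast
      ring
    have hbound : ((wordBall S (m*n)).ncard : ℝ) ≤ C * ((wordBall S' n).ncard : ℝ) := by
      have h2' : ((wordBall S' (m' * (m * n))).ncard : ℝ)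
          ≤ α₁' * (((m' * m : ℕ) : ℝ) ^ k' * (n:ℝ)^k') := by
        rw [← hcast]; exact_mod_cast h2
      have hpow : (0:ℝ) ≤ ((m' * m : ℕ) : ℝ) ^ k' := by positivity
      rw [hC]
      rw [div_mul_eq_mul_div, le_div_iff₀ hα₂']
      nlinarith [mul_le_mul_of_nonneg_left h1 (mul_nonneg hα₁'.le hpow),
        mul_le_mul_of_nonneg_left (hbb.trans h2') hα₂'.le]
    -- hamDist monotone
    have hham : (hamDist (wordBall S' n) c₁ c₂ : ℝ) ≤ (hamDist (wordBall S (m*n)) c₁ c₂ : ℝ) := by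
      have : {x ∈ wordBall S' n | c₁ x ≠ c₂ x} ⊆ {x ∈ wordBall S (m*n) | c₁ x ≠ c₂ x} :=
        fun x hx => ⟨hsub n hx.1, hx.2⟩
      exact_mod_cast Set.ncard_le_ncard this
        ((wordBall_finite hSfin (m*n)).subset (Set.sep_subset _ _))
    calc f' n ≤ (hamDist (wordBall S (m*n)) c₁ c₂ : ℝ) / (wordBall S' n).ncard := by
          show (hamDist (wordBall S' n) c₁ c₂ : ℝ) / (wordBall S' n).ncard ≤ _
          gcongr
      _ ≤ C * f (m * n) := by
          rw [hf, mul_div_assoc']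
          rw [div_le_div_iff₀ (b'pos n) (bpos (m*n))]
          nlinarith [mul_le_mul_of_nonneg_left hbound
            (show (0:ℝ) ≤ (hamDist (wordBall S (m*n)) c₁ c₂ : ℝ) from Nat.cast_nonneg _)]
  have htend' : Tendsto f' atTop (𝓝 0) := by
    have hC0 : Tendsto (fun n => C * f (m*n)) atTop (𝓝 (C*0)) := htend2.const_mul C
    rw [mul_zero] at hC0
    exact squeeze_zero' (Eventually.of_forall f'nonneg) hcomp hC0
  exact htend'.limsup_eq
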